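/- Let 𝒫 be a monotone graph property and let k ≥ 1 be an integer. Let 𝒦 be the class of finite graphs K such that every connected component of K has at most k vertices and such that the disjoint union of some finite number of copies of K is not in 𝒫. Let 𝒦' be the set of graphs in 𝒦 that do not properly contain another graph of 𝒦 as a subgraph. Then: (a) for every K ∈ 𝒦', the connected components of K are pairwise non-isomorphic; and (b) 𝒦' contains only finitely many graphs up to isomorphism — at most 2^N of them, where N is the number of isomorphism types of connected graphs with at most k vertices. -/

import Mathlib

open scoped Classical

noncomputable section

/-- A finite simple graph, with vertex set `Fin n`. -/
structure FinGraph where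
  n : ℕ
  adj : SimpleGraph (Fin n)

namespace FinGraph

/-- `G` has all vertex degrees at most `d`. -/
def DegreeBound (G : FinGraph) (d : ℕ) : Prop :=
  ∀ v : Fin G.n, (G.adj.neighborSet v).ncard ≤ d

/-- `G` is `(δ,k)`-hyper-finite: one can delete a set `S` of at most `δ·|V(G)|` edges
so that all connected components of the remaining graph have at most `k` vertices. -/
def HyperFinite (G : FinGraph) (δ : ℝ) (k : ℕ) : Prop :=
  ∃ S ⊆ G.adj.edgeSet, (S.ncard : ℝ) ≤ δ * G.n ∧
    ∀ v : Fin G.n, (((G.adj.deleteEdges S).connectedComponentMk v).supp).ncard ≤ k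

/-- The ball of radius `r` around `v` in `G`: all vertices at graph distance at most `r`. -/
def ball (G : FinGraph) (v : Fin G.n) (r : ℕ) : Set (Fin G.n) :=
  {u | ∃ p : G.adj.Walk v u, p.length ≤ r}

lemma mem_ball_self (G : FinGraph) (v : Fin G.n) (r : ℕ) : v ∈ G.ball v r :=
  ⟨SimpleGraph.Walk.nil, by simp⟩

end FinGraph

/-- A rooted finite graph. -/
structure RootedGraph where
  n : ℕ
  adj : SimpleGraph (Fin n)
  root : Fin n

/-- Rooted isomorphism: a graph isomorphism mapping root to root. -/
def RootedGraph.RIso (H K : RootedGraph) : Prop :=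
  ∃ φ : H.adj ≃g K.adj, φ H.root = K.root

instance rootedSetoid : Setoid RootedGraph where
  r := RootedGraph.RIso
  iseqv := by
    constructor
    · intro H; exact ⟨RelIso.refl _, rfl⟩
    · rintro H K ⟨φ, hφ⟩
      refine ⟨φ.symm, ?_⟩
      rw [← hφ]
      exact φ.symm_apply_apply H.root
    · rintro H K L ⟨φ, hφ⟩ ⟨ψ, hψ⟩
      exact ⟨φ.trans ψ, by rw [RelIso.trans_apply, hφ, hψ]⟩

/-- Isomorphism types of rooted finite graphs. -/
def RootedIsoClass := Quotient rootedSetoid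

/-- The isomorphism type of the rooted ball `(B_G(v,r), v)`. -/
noncomputable def FinGraph.ballType (G : FinGraph) (v : Fin G.n) (r : ℕ) : RootedIsoClass :=
  letI : Fintype (G.ball v r) := Fintype.ofFinite _
  let e := Fintype.equivFin (G.ball v r)
  Quotient.mk rootedSetoid
    ⟨Fintype.card (G.ball v r),
     SimpleGraph.comap (⇑e.symm) (G.adj.induce (G.ball v r)),
     e ⟨v, G.mem_ball_self v r⟩⟩

/-- `μ_r^G(H)`: the fraction of vertices of `G` whose rooted `r`-ball has isomorphism type `H`. -/
noncomputable def mu (G : FinGraph) (r : ℕ) (H : RootedIsoClass) : ℝ :=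
  ({v : Fin G.n | G.ballType v r = H}.ncard : ℝ) / G.n

/-- `ρ_r(G,G') = Σ_H |μ_r^G(H) - μ_r^{G'}(H)|`, summed over all isomorphism types of
rooted graphs (only finitely many summands are nonzero). -/
noncomputable def rho (r : ℕ) (G G' : FinGraph) : ℝ :=
  ∑' H : RootedIsoClass, |mu G r H - mu G' r H|

/-- Isomorphism of (unrooted) finite graphs. -/
def FinGraph.Iso (G G' : FinGraph) : Prop := Nonempty (G.adj ≃g G'.adj)

/-- `H` occurs as a subgraph of `G`. -/
def FinGraph.IsSubgraphOf (H G : FinGraph) : Prop :=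
  ∃ f : Fin H.n ↪ Fin G.n, ∀ u v, H.adj.Adj u v → G.adj.Adj (f u) (f v)

/-- `G` is `ε`-far (with respect to degree bound `d`) from the graph property `P`:
every graph on the vertex set of `G` satisfying `P` differs from `G` in at least
`ε·d·|V(G)|` edges. -/
def FarFrom (G : FinGraph) (d : ℕ) (ε : ℝ) (P : Set FinGraph) : Prop :=
  ∀ H : SimpleGraph (Fin G.n), (⟨G.n, H⟩ : FinGraph) ∈ P →
    ε * d * G.n ≤ ((symmDiff G.adj.edgeSet H.edgeSet).ncard : ℝ)

/-- `H` is a minor of `G` (branch-set definition: equivalent, for simple graphs, to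
obtaining `H` from `G` by vertex deletions, edge deletions and edge contractions). -/
def SimpleGraph.HasMinor {V W : Type*} (G : SimpleGraph V) (H : SimpleGraph W) : Prop :=
  ∃ B : W → Set V,
    (∀ u, (G.induce (B u)).Connected) ∧
    (∀ u u', u ≠ u' → Disjoint (B u) (B u')) ∧
    (∀ u u', H.Adj u u' → ∃ x ∈ B u, ∃ y ∈ B u', G.Adj x y)

/-- `H` is a minor of the finite graph `G`. -/
def FinGraph.HasMinor (G H : FinGraph) : Prop := SimpleGraph.HasMinor G.adj H.adj

/-- A graph property (class of graphs) closed under isomorphism. -/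
def IsoClosed (P : Set FinGraph) : Prop :=
  ∀ G G' : FinGraph, FinGraph.Iso G G' → G ∈ P → G' ∈ P

/-- A monotone graph property: closed under taking subgraphs. -/
def MonotoneProp (P : Set FinGraph) : Prop :=
  ∀ G ∈ P, ∀ H : FinGraph, H.IsSubgraphOf G → H ∈ P

/-- A minor-closed graph property. -/
def MinorClosed (P : Set FinGraph) : Prop :=
  ∀ G ∈ P, ∀ H : FinGraph, G.HasMinor H → H ∈ P

/-- A hyper-finite family of graphs. -/
def HyperFiniteFamily (A : Set FinGraph) : Prop :=
  ∀ δ : ℝ, 0 < δ → ∃ k : ℕ, 1 ≤ k ∧ ∀ G ∈ A, G.HyperFinite δ k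

end

/-- The disjoint union of `m` copies of `K`, as a finite graph on `Fin (m * K.n)`. -/
def FinGraph.copies (K : FinGraph) (m : ℕ) : FinGraph :=
  ⟨m * K.n,
    SimpleGraph.comap (⇑(finProdFinEquiv (m := m) (n := K.n)).symm)
      { Adj := fun p q : Fin m × Fin K.n => p.1 = q.1 ∧ K.adj.Adj p.2 q.2
        symm := ⟨fun p q h => ⟨h.1.symm, K.adj.symm.symm _ _ h.2⟩⟩
        loopless := ⟨fun p h => K.adj.loopless.irrefl p.2 h.2⟩ }⟩

instance graphSetoid : Setoid FinGraph where
  r := FinGraph.Iso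
  iseqv := by
    constructor
    · intro G; exact ⟨RelIso.refl _⟩
    · rintro G G' ⟨φ⟩; exact ⟨φ.symm⟩
    · rintro G G' G'' ⟨φ⟩ ⟨ψ⟩; exact ⟨φ.trans ψ⟩

/-- Isomorphism types of (unrooted) finite graphs. -/
def GraphIsoClass := Quotient graphSetoid

/-- The isomorphism type of a finite graph. -/
def FinGraph.isoClass (G : FinGraph) : GraphIsoClass := Quotient.mk graphSetoid G

/-- The class `𝒦 = 𝒦(𝒫,k)`: graphs all of whose connected components have at most `k`
vertices, such that the disjoint union of some finite (positive) number of copies is not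
in `𝒫`. -/
def KKfam (P : Set FinGraph) (k : ℕ) : Set FinGraph :=
  {K | (∀ v : Fin K.n, ((K.adj.connectedComponentMk v).supp).ncard ≤ k) ∧
       ∃ m : ℕ, 1 ≤ m ∧ K.copies m ∉ P}

/-- The minimal members `𝒦'` of `𝒦`: those that do not properly contain another member of
`𝒦` as a subgraph. -/
def KKfamMin (P : Set FinGraph) (k : ℕ) : Set FinGraph :=
  {K ∈ KKfam P k |
    ¬ ∃ K' ∈ KKfam P k, K'.IsSubgraphOf K ∧ ¬ K.IsSubgraphOf K'}


section AuxMFF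
open SimpleGraph

/-- Pack a finite simple graph into a `FinGraph`. -/
noncomputable def ofG {V : Type} [Fintype V] (G : SimpleGraph V) : FinGraph :=
  ⟨Fintype.card V, G.comap ⇑(Fintype.equivFin V).symm⟩

noncomputable def ofGIso {V : Type} [Fintype V] (G : SimpleGraph V) : (ofG G).adj ≃g G :=
  SimpleGraph.Iso.comap (Fintype.equivFin V).symm G

noncomputable def FinGraph.restrict (K : FinGraph) (S : Set (Fin K.n)) : FinGraph :=
  ofG (K.adj.induce S)

noncomputable def restrictIso (K : FinGraph) (S : Set (Fin K.n)) :
    (K.restrict S).adj ≃g K.adj.induce S := ofGIso _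

lemma restrict_n (K : FinGraph) (S : Set (Fin K.n)) : (K.restrict S).n = S.ncard := by
  show Fintype.card ↥S = S.ncard
  rw [← Nat.card_coe_set_eq, Nat.card_eq_fintype_card]

def induceValHom {V : Type} (G : SimpleGraph V) (S : Set V) : G.induce S →g G :=
  ⟨Subtype.val, id⟩

lemma supp_ncard_le_of_hom {V W : Type} [Finite W] {G : SimpleGraph V} {H : SimpleGraph W}
    (f : G →g H) (hf : Function.Injective f) (v : V) :
    ((G.connectedComponentMk v).supp).ncard ≤ ((H.connectedComponentMk (f v)).supp).ncard := by
  have himg : f '' (G.connectedComponentMk v).supp ⊆ (H.connectedComponentMk (f v)).supp := by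
    rintro _ ⟨w, hw, rfl⟩
    rw [ConnectedComponent.mem_supp_iff, ConnectedComponent.eq] at hw ⊢
    exact hw.map f
  calc ((G.connectedComponentMk v).supp).ncard
      = (f '' (G.connectedComponentMk v).supp).ncard :=
        (Set.ncard_image_of_injective _ hf).symm
    _ ≤ _ := Set.ncard_le_ncard himg (Set.toFinite _)

lemma induce_supp_connected {V : Type} (G : SimpleGraph V) (c : G.ConnectedComponent) :
    (G.induce c.supp).Connected := by
  induction c using SimpleGraph.ConnectedComponent.ind with
  | _ v =>
    classical
    apply G.induce_connected_of_patches v (by simp)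
    intro w hw
    rw [ConnectedComponent.mem_supp_iff, ConnectedComponent.eq] at hw
    obtain ⟨p⟩ := hw.symm
    refine ⟨{x | x ∈ p.support}, ?_, p.start_mem_support, p.end_mem_support, ?_⟩
    · intro x hx
      simp only [ConnectedComponent.mem_supp_iff, ConnectedComponent.eq]
      exact ⟨(p.takeUntil x hx).reverse⟩
    · exact (p.connected_induce_support).preconnected _ _

lemma isoClass_eq_iff {G G' : FinGraph} : G.isoClass = G'.isoClass ↔ G.Iso G' :=
  ⟨fun h => Quotient.exact h, fun h => Quotient.sound h⟩

noncomputable def compType (K : FinGraph) (c : K.adj.ConnectedComponent) : GraphIsoClass :=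
  (K.restrict c.supp).isoClass

lemma compType_eq_iff {K K' : FinGraph} {c : K.adj.ConnectedComponent}
    {c' : K'.adj.ConnectedComponent} :
    compType K c = compType K' c' ↔
      Nonempty (K.adj.induce c.supp ≃g K'.adj.induce c'.supp) := by
  rw [compType, compType, isoClass_eq_iff]
  constructor
  · rintro ⟨ψ⟩
    exact ⟨(restrictIso K c.supp).symm.trans (ψ.trans (restrictIso K' c'.supp))⟩
  · rintro ⟨χ⟩
    exact ⟨(restrictIso K c.supp).trans (χ.trans (restrictIso K' c'.supp).symm)⟩

lemma copies_isSubgraphOf_copies {K K' : FinGraph} (m m' : ℕ)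
    (f : Fin K.n → Fin m' × Fin K'.n) (hinj : Function.Injective f)
    (hadj : ∀ x y, K.adj.Adj x y → (f x).1 = (f y).1 ∧ K'.adj.Adj (f x).2 (f y).2) :
    (K.copies m).IsSubgraphOf (K'.copies (m * m')) := by
  classical
  set F : Fin (m * K.n) → Fin ((m * m') * K'.n) := fun x =>
    finProdFinEquiv (finProdFinEquiv ((finProdFinEquiv.symm x).1,
      (f (finProdFinEquiv.symm x).2).1), (f (finProdFinEquiv.symm x).2).2) with hF
  have hFinj : Function.Injective F := by
    intro x y hxy
    have h1 := finProdFinEquiv.injective hxy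
    have h2 := Prod.ext_iff.mp h1
    have h3 := Prod.ext_iff.mp (finProdFinEquiv.injective h2.1)
    have h5 : f (finProdFinEquiv.symm x).2 = f (finProdFinEquiv.symm y).2 :=
      Prod.ext h3.2 h2.2
    have h6 : finProdFinEquiv.symm x = finProdFinEquiv.symm y :=
      Prod.ext h3.1 (hinj h5)
    exact finProdFinEquiv.symm.injective h6
  refine ⟨⟨F, hFinj⟩, ?_⟩
  intro x y hxy
  have hxy' : (finProdFinEquiv.symm x).1 = (finProdFinEquiv.symm y).1 ∧
      K.adj.Adj (finProdFinEquiv.symm x).2 (finProdFinEquiv.symm y).2 := hxy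
  obtain ⟨h1, h2⟩ := hxy'
  obtain ⟨ha1, ha2⟩ := hadj _ _ h2
  show (finProdFinEquiv.symm (F x)).1 = (finProdFinEquiv.symm (F y)).1 ∧
      K'.adj.Adj (finProdFinEquiv.symm (F x)).2 (finProdFinEquiv.symm (F y)).2
  rw [hF]
  simp only [Equiv.symm_apply_apply]
  exact ⟨by rw [h1, ha1], ha2⟩

lemma partA (P : Set FinGraph) (hMono : MonotoneProp P) (k : ℕ) :
    ∀ K ∈ KKfamMin P k, ∀ u v : Fin K.n, ¬ K.adj.Reachable u v →
      ¬ Nonempty ((K.adj.induce ((K.adj.connectedComponentMk u).supp)) ≃g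
         (K.adj.induce ((K.adj.connectedComponentMk v).supp))) := by
  classical
  rintro K ⟨hKfam, hKmin⟩ u v huv ⟨φ⟩
  apply hKmin
  set Cv := (K.adj.connectedComponentMk v).supp with hCvdef
  set Cu := (K.adj.connectedComponentMk u).supp with hCudef
  set S := Cvᶜ with hSdef
  have hCuS : Cu ⊆ S := by
    intro x hx hx'
    have hx1 : K.adj.connectedComponentMk x = K.adj.connectedComponentMk u := hx
    have hx2 : K.adj.connectedComponentMk x = K.adj.connectedComponentMk v := hx'
    exact huv (SimpleGraph.ConnectedComponent.eq.mp (hx1.symm.trans hx2))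
  set K' := K.restrict S with hK'def
  set e := restrictIso K S with hedef
  refine ⟨K', ⟨?_, ?_⟩, ?_, ?_⟩
  · intro x
    have hle := supp_ncard_le_of_hom (G := K'.adj) (H := K.adj)
      ⟨fun a => ((e a : ↥S) : Fin K.n), fun h => e.map_rel_iff.mpr h⟩
      (fun a b hab => e.injective (Subtype.val_injective hab)) x
    exact hle.trans (hKfam.1 _)
  · obtain ⟨m, hm1, hmP⟩ := hKfam.2
    refine ⟨m * 2, by omega, fun hP => hmP ?_⟩
    set f : Fin K.n → Fin 2 × Fin K'.n := fun x =>
      if h : x ∈ Cv then ((1 : Fin 2), e.symm ⟨(φ.symm ⟨x, h⟩ : ↥Cu), hCuS (φ.symm ⟨x, h⟩).2⟩)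
      else ((0 : Fin 2), e.symm ⟨x, h⟩) with hfdef
    have hfinj : Function.Injective f := by
      intro x y hxy
      rw [hfdef] at hxy
      by_cases hx : x ∈ Cv <;> by_cases hy : y ∈ Cv
      · simp only [dif_pos hx, dif_pos hy] at hxy
        have h2 := (Prod.ext_iff.mp hxy).2
        have h3 := Subtype.ext_iff.mp (e.symm.injective h2)
        have h4 := φ.symm.injective (Subtype.val_injective h3)
        exact Subtype.ext_iff.mp h4
      · simp only [dif_pos hx, dif_neg hy, Prod.mk.injEq] at hxy
        exact absurd hxy.1 (by decide)
      · simp only [dif_neg hx, dif_pos hy, Prod.mk.injEq] at hxy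
        exact absurd hxy.1 (by decide)
      · simp only [dif_neg hx, dif_neg hy] at hxy
        have h2 := (Prod.ext_iff.mp hxy).2
        exact Subtype.ext_iff.mp (e.symm.injective h2)
    have hfadj : ∀ x y, K.adj.Adj x y → (f x).1 = (f y).1 ∧ K'.adj.Adj (f x).2 (f y).2 := by
      intro x y hxy
      have hcomp : K.adj.connectedComponentMk x = K.adj.connectedComponentMk y :=
        SimpleGraph.ConnectedComponent.connectedComponentMk_eq_of_adj hxy
      rw [hfdef]
      by_cases hx : x ∈ Cv
      · have hx' : K.adj.connectedComponentMk x = K.adj.connectedComponentMk v := hx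
        have hy : y ∈ Cv := (hcomp.symm.trans hx' : _)
        simp only [dif_pos hx, dif_pos hy]
        refine ⟨trivial, ?_⟩
        have hadj1 : (K.adj.induce Cv).Adj ⟨x, hx⟩ ⟨y, hy⟩ := hxy
        have hadj2 := φ.symm.map_rel_iff.mpr hadj1
        exact e.symm.map_rel_iff.mpr hadj2
      · have hy : ¬ y ∈ Cv := by
          intro hyC
          have hy' : K.adj.connectedComponentMk y = K.adj.connectedComponentMk v := hyC
          exact hx ((hcomp.trans hy' : _))
        simp only [dif_neg hx, dif_neg hy]
        refine ⟨trivial, ?_⟩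
        have hadj1 : (K.adj.induce S).Adj ⟨x, hx⟩ ⟨y, hy⟩ := hxy
        exact e.symm.map_rel_iff.mpr hadj1
    exact hMono _ hP (K.copies m) (copies_isSubgraphOf_copies m 2 f hfinj hfadj)
  · exact ⟨⟨fun a => ((e a : ↥S) : Fin K.n),
      fun a b hab => e.injective (Subtype.val_injective hab)⟩,
      fun a b h => e.map_rel_iff.mpr h⟩
  · rintro ⟨g, -⟩
    have h1 : K'.n < K.n := by
      rw [hK'def, restrict_n]
      have hv : v ∉ S := fun hvS => hvS rfl
      have hlt : S ⊂ Set.univ :=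
        Set.ssubset_univ_iff.mpr (fun hSu => hv (hSu ▸ Set.mem_univ v))
      have hcard := Set.ncard_lt_ncard hlt Set.finite_univ
      simpa [Set.ncard_univ, Nat.card_eq_fintype_card] using hcard
    have h2 : K.n ≤ K'.n := by
      have hcard := Fintype.card_le_of_embedding g
      simpa using hcard
    omega

lemma compType_injective_of_min (P : Set FinGraph) (hMono : MonotoneProp P) (k : ℕ)
    (K : FinGraph) (hK : K ∈ KKfamMin P k) : Function.Injective (compType K) := by
  intro c c' h
  induction c using SimpleGraph.ConnectedComponent.ind with
  | _ x =>
    induction c' using SimpleGraph.ConnectedComponent.ind with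
    | _ y =>
      by_contra hne
      have hreach : ¬ K.adj.Reachable x y := fun hr => hne (ConnectedComponent.sound hr)
      exact partA P hMono k K hK x y hreach (compType_eq_iff.mp h)

lemma glue {K K' : FinGraph} (hK : Function.Injective (compType K))
    (hK' : Function.Injective (compType K'))
    (h : Set.range (compType K) = Set.range (compType K')) : K.Iso K' := by
  classical
  have hsurj : ∀ c, ∃ c', compType K c = compType K' c' := by
    intro c
    have hmem : compType K c ∈ Set.range (compType K') := h ▸ Set.mem_range_self c
    obtain ⟨c', hc'⟩ := hmem
    exact ⟨c', hc'.symm⟩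
  choose β hβ using hsurj
  have hβinj : Function.Injective β := fun a b hab => hK (by rw [hβ a, hβ b, hab])
  have hβsurj : Function.Surjective β := by
    intro c'
    have hmem : compType K' c' ∈ Set.range (compType K) := h ▸ Set.mem_range_self c'
    obtain ⟨c, hc⟩ := hmem
    exact ⟨c, hK' ((hβ c).symm.trans hc)⟩
  have hiso : ∀ c, Nonempty (K.adj.induce c.supp ≃g K'.adj.induce (β c).supp) :=
    fun c => compType_eq_iff.mp (hβ c)
  let φ : ∀ c, K.adj.induce c.supp ≃g K'.adj.induce (β c).supp := fun c => (hiso c).some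
  have hcast : ∀ (c c' : K.adj.ConnectedComponent) (hcc : c = c') (x : Fin K.n)
      (hx : x ∈ c.supp) (hx' : x ∈ c'.supp),
      ((φ c') ⟨x, hx'⟩).val = ((φ c) ⟨x, hx⟩).val := by
    intro c c' hcc x hx hx'
    subst hcc
    rfl
  let Ψ : Fin K.n → Fin K'.n := fun x =>
    ((φ (K.adj.connectedComponentMk x)) ⟨x, rfl⟩).val
  have hmk : ∀ x, K'.adj.connectedComponentMk (Ψ x) = β (K.adj.connectedComponentMk x) :=
    fun x => ((φ (K.adj.connectedComponentMk x)) ⟨x, rfl⟩).2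
  have hinj : Function.Injective Ψ := by
    intro x y hxy
    have h1 : β (K.adj.connectedComponentMk x) = β (K.adj.connectedComponentMk y) := by
      rw [← hmk x, ← hmk y, hxy]
    have h2 := hβinj h1
    have hy : y ∈ (K.adj.connectedComponentMk x).supp := h2.symm
    have h3 : ((φ (K.adj.connectedComponentMk x)) ⟨y, hy⟩).val = Ψ y :=
      hcast _ _ h2.symm y rfl hy
    have h4 : ((φ (K.adj.connectedComponentMk x)) ⟨x, rfl⟩) =
        ((φ (K.adj.connectedComponentMk x)) ⟨y, hy⟩) :=
      Subtype.val_injective (hxy.trans h3.symm)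
    exact Subtype.ext_iff.mp ((φ (K.adj.connectedComponentMk x)).injective h4)
  have hsurjΨ : Function.Surjective Ψ := by
    intro y'
    obtain ⟨c, hc⟩ := hβsurj (K'.adj.connectedComponentMk y')
    have hy' : y' ∈ (β c).supp := hc.symm
    refine ⟨((φ c).symm ⟨y', hy'⟩).val, ?_⟩
    have hmka : K.adj.connectedComponentMk ((φ c).symm ⟨y', hy'⟩).val = c :=
      ((φ c).symm ⟨y', hy'⟩).2
    have h5 : Ψ ((φ c).symm ⟨y', hy'⟩).val =
        ((φ c) ⟨((φ c).symm ⟨y', hy'⟩).val, ((φ c).symm ⟨y', hy'⟩).2⟩).val :=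
      hcast c _ hmka.symm _ ((φ c).symm ⟨y', hy'⟩).2 rfl
    rw [h5]
    have h6 : (⟨((φ c).symm ⟨y', hy'⟩).val, ((φ c).symm ⟨y', hy'⟩).2⟩ : c.supp) =
        (φ c).symm ⟨y', hy'⟩ := rfl
    rw [h6, (φ c).apply_symm_apply]
  have hadj : ∀ x y, K.adj.Adj x y ↔ K'.adj.Adj (Ψ x) (Ψ y) := by
    intro x y
    constructor
    · intro hxy
      have hc : K.adj.connectedComponentMk x = K.adj.connectedComponentMk y :=
        SimpleGraph.ConnectedComponent.connectedComponentMk_eq_of_adj hxy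
      have hy : y ∈ (K.adj.connectedComponentMk x).supp := hc.symm
      have h3 : Ψ y = ((φ (K.adj.connectedComponentMk x)) ⟨y, hy⟩).val :=
        (hcast _ _ hc.symm y rfl hy).symm
      rw [show Ψ y = ((φ (K.adj.connectedComponentMk x)) ⟨y, hy⟩).val from h3]
      have hind : (K.adj.induce (K.adj.connectedComponentMk x).supp).Adj ⟨x, rfl⟩ ⟨y, hy⟩ := hxy
      exact (φ (K.adj.connectedComponentMk x)).map_rel_iff.mpr hind
    · intro hxy
      have h1 : K'.adj.connectedComponentMk (Ψ x) = K'.adj.connectedComponentMk (Ψ y) :=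
        SimpleGraph.ConnectedComponent.connectedComponentMk_eq_of_adj hxy
      rw [hmk x, hmk y] at h1
      have hc := hβinj h1
      have hy : y ∈ (K.adj.connectedComponentMk x).supp := hc.symm
      have h3 : Ψ y = ((φ (K.adj.connectedComponentMk x)) ⟨y, hy⟩).val :=
        (hcast _ _ hc.symm y rfl hy).symm
      rw [h3] at hxy
      have hind : (K'.adj.induce (β (K.adj.connectedComponentMk x)).supp).Adj
          ((φ (K.adj.connectedComponentMk x)) ⟨x, rfl⟩)
          ((φ (K.adj.connectedComponentMk x)) ⟨y, hy⟩) := hxy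
      exact (φ (K.adj.connectedComponentMk x)).map_rel_iff.mp hind
  exact ⟨{ toEquiv := Equiv.ofBijective Ψ ⟨hinj, hsurjΨ⟩,
           map_rel_iff' := fun {a b} => (hadj a b).symm }⟩

lemma typeset_subset (P : Set FinGraph) (k : ℕ) (K : FinGraph) (hK : K ∈ KKfam P k) :
    Set.range (compType K) ⊆ {c : GraphIsoClass |
      ∃ K₀ : FinGraph, K₀.isoClass = c ∧ K₀.adj.Connected ∧ K₀.n ≤ k} := by
  rintro _ ⟨c, rfl⟩
  refine ⟨K.restrict c.supp, rfl, ?_, ?_⟩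
  · exact ((restrictIso K c.supp).connected_iff).mpr (induce_supp_connected _ _)
  · rw [restrict_n]
    induction c using SimpleGraph.ConnectedComponent.ind with
    | _ x => exact hK.1 x

lemma T_finite (k : ℕ) : {c : GraphIsoClass |
    ∃ K : FinGraph, K.isoClass = c ∧ K.adj.Connected ∧ K.n ≤ k}.Finite := by
  have hFG : ∀ (G H : FinGraph), G.n = H.n → HEq G.adj H.adj → G = H := by
    rintro ⟨n, a⟩ ⟨m, b⟩ hnm hab
    dsimp at hnm
    subst hnm
    rw [heq_eq_eq] at hab
    subst hab
    rfl
  have h1 : {K : FinGraph | K.n ≤ k}.Finite := by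
    rw [← Set.finite_coe_iff]
    refine Finite.of_injective (fun K => (⟨⟨K.val.n, Nat.lt_succ_of_le K.2⟩, K.val.adj⟩ :
      Σ n : Fin (k+1), SimpleGraph (Fin n))) ?_
    intro a b hEq
    have h1 := Sigma.ext_iff.mp hEq
    have hn : a.val.n = b.val.n := congrArg Fin.val h1.1
    exact Subtype.ext (hFG _ _ hn h1.2)
  have h2 : {c : GraphIsoClass | ∃ K : FinGraph, K.isoClass = c ∧ K.adj.Connected ∧ K.n ≤ k}
      ⊆ FinGraph.isoClass '' {K : FinGraph | K.n ≤ k} := by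
    rintro c ⟨K, rfl, -, hn⟩; exact ⟨K, hn, rfl⟩
  exact (h1.image _).subset h2

lemma subsets_finite_card {α : Type*} {T : Set α} (hT : T.Finite) :
    {s : Set α | s ⊆ T}.Finite ∧ {s : Set α | s ⊆ T}.ncard ≤ 2 ^ T.ncard := by
  classical
  have heq : {s : Set α | s ⊆ T} = (fun u : Finset α => (u : Set α)) '' ↑hT.toFinset.powerset := by
    ext s
    constructor
    · intro hs
      refine ⟨(hT.subset hs).toFinset, ?_, (hT.subset hs).coe_toFinset⟩
      rw [Finset.mem_coe, Finset.mem_powerset, ← Finset.coe_subset,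
        (hT.subset hs).coe_toFinset, hT.coe_toFinset]
      exact hs
    · rintro ⟨u, hu, rfl⟩
      rw [Finset.mem_coe, Finset.mem_powerset] at hu
      intro x hx
      exact hT.mem_toFinset.mp (hu (by exact_mod_cast hx))
  have hfin : ((fun u : Finset α => (u : Set α)) '' ↑hT.toFinset.powerset).Finite :=
    (hT.toFinset.powerset.finite_toSet).image _
  constructor
  · rw [heq]; exact hfin
  · rw [heq]
    calc ((fun u : Finset α => (u : Set α)) '' ↑hT.toFinset.powerset).ncard
        ≤ (↑hT.toFinset.powerset : Set (Finset α)).ncard :=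
          Set.ncard_image_le (hT.toFinset.powerset.finite_toSet)
      _ = hT.toFinset.powerset.card := Set.ncard_coe_finset _
      _ = 2 ^ hT.toFinset.card := Finset.card_powerset _
      _ = 2 ^ T.ncard := by rw [Set.ncard_eq_toFinset_card T hT]

end AuxMFF

/-- For a monotone graph property `𝒫` and `k ≥ 1`: (a) for every `K ∈ 𝒦'`, distinct
connected components of `K` are non-isomorphic; (b) up to isomorphism, `𝒦'` has at most
`2^N` members, where `N` is the number of isomorphism types of connected graphs with at
most `k` vertices. -/
theorem minimal_family_finite (P : Set FinGraph) (hIso : IsoClosed P)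
    (hMono : MonotoneProp P) (k : ℕ) (hk : 1 ≤ k) :
    (∀ K ∈ KKfamMin P k, ∀ u v : Fin K.n, ¬ K.adj.Reachable u v →
      ¬ Nonempty
        ((K.adj.induce ((K.adj.connectedComponentMk u).supp)) ≃g
         (K.adj.induce ((K.adj.connectedComponentMk v).supp)))) ∧
    (∃ Z : Set FinGraph, Z.Finite ∧
      Z.ncard ≤
        2 ^ ({c : GraphIsoClass |
          ∃ K : FinGraph, K.isoClass = c ∧ K.adj.Connected ∧ K.n ≤ k}.ncard) ∧
      ∀ K ∈ KKfamMin P k, ∃ z ∈ Z, FinGraph.Iso K z) := by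
  classical
  refine ⟨partA P hMono k, ?_⟩
  set T := {c : GraphIsoClass | ∃ K : FinGraph, K.isoClass = c ∧ K.adj.Connected ∧ K.n ≤ k}
    with hTdef
  have hTfin : T.Finite := T_finite k
  obtain ⟨hPfin, hPcard⟩ := subsets_finite_card hTfin
  set R := {s : Set GraphIsoClass | s ⊆ T ∧ ∃ K ∈ KKfamMin P k, Set.range (compType K) = s}
    with hRdef
  have hRsub : R ⊆ {s | s ⊆ T} := fun s hs => hs.1
  have hRfin : R.Finite := hPfin.subset hRsub
  have hchoice : ∀ s : Set GraphIsoClass, ∃ K : FinGraph,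
      s ∈ R → K ∈ KKfamMin P k ∧ Set.range (compType K) = s := by
    intro s
    by_cases hs : s ∈ R
    · obtain ⟨K, hK1, hK2⟩ := hs.2
      exact ⟨K, fun _ => ⟨hK1, hK2⟩⟩
    · exact ⟨⟨0, ⊥⟩, fun h => absurd h hs⟩
  choose g hg using hchoice
  refine ⟨g '' R, hRfin.image _, ?_, ?_⟩
  · calc (g '' R).ncard ≤ R.ncard := Set.ncard_image_le hRfin
      _ ≤ {s : Set GraphIsoClass | s ⊆ T}.ncard := Set.ncard_le_ncard hRsub hPfin
      _ ≤ 2 ^ T.ncard := hPcard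
  · intro K hK
    have hsR : Set.range (compType K) ∈ R :=
      ⟨typeset_subset P k K hK.1, K, hK, rfl⟩
    refine ⟨g _, Set.mem_image_of_mem g hsR, ?_⟩
    obtain ⟨hg1, hg2⟩ := hg _ hsR
    exact glue (compType_injective_of_min P hMono k K hK)
      (compType_injective_of_min P hMono k _ hg1) hg2.symm
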